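/- Let Ω be a homotopy functor from the category Zᵗ(Top) to a category D. Let (X,Λ_X) and (Y,Λ_Y) be objects, F : X×[0,1] → Y continuous with f_t = F∘ι_t for t ∈ {0,1}, and let ζ_F : (Λ_X • θ_{[0,1]}) → F*(Λ_Y) be a morphism; set ζ₀(x) := ζ_F(x,0) and ζ'(x) := ζ_F(x,1), and let ζ₁ : Λ_X → f₁*(Λ_Y) be any morphism. Define c_F : X → {1,-1} by c_F(x) := ζ₁(x)·ζ'(x) (a function constant on path components). Then Ω(f₀,ζ₀) = Ω(f₁,ζ₁) ∘ Ω(1_X, c_F·1_{Λ_X}), where (1_X, c_F·1_{Λ_X}) is the endomorphism of (X,Λ_X) given by the identity map of X together with the morphism x ↦ c_F(x). -/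

import Mathlib

open unitInterval CategoryTheory

structure ZtSystem (X : Type*) [TopologicalSpace X] where
  val : ∀ {x y : X}, Path x y → ℤˣ
  homotopic_eq : ∀ {x y : X} {γ γ' : Path x y}, Path.Homotopic γ γ' → val γ = val γ'
  refl_eq : ∀ x : X, val (Path.refl x) = 1
  trans_eq : ∀ {x y z : X} (γ : Path x y) (δ : Path y z), val (γ.trans δ) = val γ * val δ

def ZtSystem.IsMorphism {X : Type*} [TopologicalSpace X] (Λ₀ Λ₁ : ZtSystem X)
    (ζ : X → ℤˣ) : Prop :=
  ∀ {x y : X} (γ : Path x y), Λ₀.val γ * Λ₁.val γ = ζ x * ζ y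

def ZtSystem.pullback {X Y : Type*} [TopologicalSpace X] [TopologicalSpace Y]
    (f : C(X, Y)) (Λ : ZtSystem Y) : ZtSystem X where
  val γ := Λ.val (γ.map f.continuous)
  homotopic_eq h := Λ.homotopic_eq (h.map f)
  refl_eq x := by
    show Λ.val ((Path.refl x).map f.continuous) = 1
    rw [show (Path.refl x).map f.continuous = Path.refl (f x) from Path.ext rfl]
    exact Λ.refl_eq _
  trans_eq γ δ := by
    show Λ.val ((γ.trans δ).map f.continuous) = _
    rw [Path.map_trans]
    exact Λ.trans_eq _ _

/-- An object of the category `Zᵗ(Top)`: a space together with a `ℤᵗ`-system. -/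
structure ZtTop where
  carrier : Type*
  [inst : TopologicalSpace carrier]
  lam : ZtSystem carrier

attribute [instance] ZtTop.inst

/-- A morphism in `Zᵗ(Top)`. -/
@[ext]
structure ZtHom (A B : ZtTop) where
  f : C(A.carrier, B.carrier)
  ζ : A.carrier → ℤˣ
  isMor : ZtSystem.IsMorphism A.lam (ZtSystem.pullback f B.lam) ζ

instance : Category ZtTop where
  Hom := ZtHom
  id A := { f := ContinuousMap.id _, ζ := fun _ => 1,
            isMor := by
              intro x y γ
              show A.lam.val γ * A.lam.val (γ.map continuous_id) = 1 * 1
              rw [Path.map_id, Int.units_mul_self, one_mul] }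
  comp {A B C} u v :=
    { f := v.f.comp u.f
      ζ := fun x => v.ζ (u.f x) * u.ζ x
      isMor := by
        intro x y γ
        have h1 : A.lam.val γ * B.lam.val (γ.map u.f.continuous) = u.ζ x * u.ζ y := u.isMor γ
        have h2 : B.lam.val (γ.map u.f.continuous) *
            C.lam.val ((γ.map u.f.continuous).map v.f.continuous) =
            v.ζ (u.f x) * v.ζ (u.f y) := v.isMor (γ.map u.f.continuous)
        show A.lam.val γ * C.lam.val (γ.map (v.f.comp u.f).continuous) = _
        have hmap : γ.map (v.f.comp u.f).continuous
            = (γ.map u.f.continuous).map v.f.continuous := by rw [Path.map_map]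
        rw [hmap]
        have hb : B.lam.val (γ.map u.f.continuous) * B.lam.val (γ.map u.f.continuous) = 1 :=
          Int.units_mul_self _
        calc A.lam.val γ * C.lam.val ((γ.map u.f.continuous).map v.f.continuous)
            = (A.lam.val γ * B.lam.val (γ.map u.f.continuous)) *
              (B.lam.val (γ.map u.f.continuous) *
                C.lam.val ((γ.map u.f.continuous).map v.f.continuous)) := by
              rw [mul_assoc (A.lam.val γ), ← mul_assoc (B.lam.val (γ.map u.f.continuous))
                (B.lam.val (γ.map u.f.continuous)), hb, one_mul]
          _ = (u.ζ x * u.ζ y) * (v.ζ (u.f x) * v.ζ (u.f y)) := by rw [h1, h2]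
          _ = v.ζ (u.f x) * u.ζ x * (v.ζ (u.f y) * u.ζ y) := by
              rw [mul_mul_mul_comm, mul_comm (u.ζ x), mul_comm (u.ζ y)] }
  id_comp u := ZtHom.ext (ContinuousMap.comp_id _) (funext fun x => mul_one _)
  comp_id u := ZtHom.ext (ContinuousMap.id_comp _) (funext fun x => one_mul _)
  assoc u v w := ZtHom.ext rfl (funext fun x => (mul_assoc _ _ _).symm)

/-- The `ℤᵗ`-system `Λ • θ_{[0,1]}` on `X × [0,1]`. -/
def ZtSystem.prodI {X : Type*} [TopologicalSpace X] (Λ : ZtSystem X) :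
    ZtSystem (X × I) :=
  ZtSystem.pullback ⟨Prod.fst, continuous_fst⟩ Λ

/-- The path `s ↦ (x, s·t)` in `X × [0,1]` from `(x,0)` to `(x,t)`. -/
def Path.seg {X : Type*} [TopologicalSpace X] (x : X) (t : I) :
    Path ((x, 0) : X × I) (x, t) where
  toFun s := (x, ⟨s.1 * t.1, unitInterval.mul_mem s.2 t.2⟩)
  continuous_toFun := by fun_prop
  source' := by
    refine Prod.ext rfl (Subtype.ext ?_)
    simp
  target' := by
    refine Prod.ext rfl (Subtype.ext ?_)
    simp

/-- The vertical path `t ↦ (x, t)` in `X × [0,1]` from `(x,0)` to `(x,1)`. -/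
def Path.vert {X : Type*} [TopologicalSpace X] (x : X) :
    Path ((x, 0) : X × I) (x, 1) where
  toFun t := (x, t)
  continuous_toFun := by fun_prop
  source' := rfl
  target' := rfl

/-- The object `(X × [0,1], Λ • θ_{[0,1]})` of `Zᵗ(Top)`. -/
def ZtTop.prodI (A : ZtTop) : ZtTop :=
  { carrier := A.carrier × I, lam := A.lam.prodI }

/-- The end inclusion `(ι_t, 1_Λ) : (X,Λ) → (X × [0,1], Λ • θ_{[0,1]})`. -/
def ZtTop.iota (A : ZtTop) (t : I) : A ⟶ A.prodI where
  f := ⟨fun x => (x, t), by fun_prop⟩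
  ζ := fun _ => 1
  isMor := by
    intro x y γ
    show A.lam.val γ * A.lam.prodI.val (γ.map _) = 1 * 1
    have : A.lam.prodI.val (γ.map (Continuous.prodMk (f := fun x : A.carrier => x)
        (g := fun _ : A.carrier => t) continuous_id continuous_const)) = A.lam.val γ := by
      show A.lam.val ((γ.map _).map _) = _
      rw [Path.map_map]
      congr 1
    rw [this, Int.units_mul_self, one_mul]

/-- The projection `(r, 1) : (X × [0,1], Λ • θ_{[0,1]}) → (X,Λ)`. -/
def ZtTop.proj (A : ZtTop) : A.prodI ⟶ A where
  f := ⟨Prod.fst, continuous_fst⟩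
  ζ := fun _ => 1
  isMor := by
    intro p q μ
    show A.lam.prodI.val μ * A.lam.val (μ.map continuous_fst) = 1 * 1
    show A.lam.val (μ.map continuous_fst) * A.lam.val (μ.map continuous_fst) = 1 * 1
    rw [Int.units_mul_self, one_mul]

/-- A homotopy functor on `Zᵗ(Top)`. -/
def IsHomotopyFunctor {D : Type*} [Category D] (Ω : Functor ZtTop D) : Prop :=
  ∀ A : ZtTop, Ω.map (A.proj) ≫ Ω.map (A.iota 0) = 𝟙 (Ω.obj A.prodI)

/-- The endomorphism `(1_X, -1_Λ)` of `(X, Λ)`. -/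
def ZtTop.negId (A : ZtTop) : A ⟶ A where
  f := ContinuousMap.id _
  ζ := fun _ => -1
  isMor := by
    intro x y γ
    show A.lam.val γ * A.lam.val (γ.map continuous_id) = (-1 : ℤˣ) * (-1 : ℤˣ)
    rw [Path.map_id, Int.units_mul_self, neg_mul_neg, one_mul]

/-- The involution on `Zᵗ(Top)`: `(f, ζ) ↦ (f, -ζ)`. -/
def ZtHom.neg {A B : ZtTop} (u : A ⟶ B) : A ⟶ B where
  f := u.f
  ζ := fun x => -(u.ζ x)
  isMor := by
    intro x y γ
    rw [neg_mul_neg]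
    exact u.isMor γ

lemma ZtTop.iota_comp_proj (A : ZtTop) (t : I) : A.iota t ≫ A.proj = 𝟙 A := by
  apply ZtHom.ext
  · rfl
  · funext x; show (1 : ℤˣ) * 1 = 1; rw [one_mul]

lemma omega_iota_eq {D : Type*} [Category D] (Ω : Functor ZtTop D)
    (hΩ : IsHomotopyFunctor Ω) (A : ZtTop) (t : I) :
    Ω.map (A.iota t) = Ω.map (A.iota 0) := by
  calc Ω.map (A.iota t) = Ω.map (A.iota t) ≫ (Ω.map A.proj ≫ Ω.map (A.iota 0)) := by
        rw [hΩ A, Category.comp_id]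
    _ = (Ω.map (A.iota t) ≫ Ω.map A.proj) ≫ Ω.map (A.iota 0) := by rw [Category.assoc]
    _ = Ω.map (A.iota 0) := by
        rw [← Ω.map_comp, A.iota_comp_proj t, Ω.map_id, Category.id_comp]

open CategoryTheory in
/-- For a homotopy functor `Ω` on `Zᵗ(Top)`: if `(f₀,ζ₀) = (F,ζ_F)∘(ι₀,1)`,
`ζ₁` is any morphism with underlying map `f₁ = F∘ι₁`, and
`c_F(x) = ζ₁(x)·ζ_F(x,1)`, then `Ω(f₀,ζ₀) = Ω(f₁,ζ₁) ∘ Ω(1_X, c_F·1)`. -/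
theorem homotopy_functor_comparison {D : Type*} [Category D]
    (Ω : Functor ZtTop D) (hΩ : IsHomotopyFunctor Ω)
    (A B : ZtTop) (mF : A.prodI ⟶ B) (m₁ : A ⟶ B) (mc : A ⟶ A)
    (hm₁f : ZtHom.f m₁ = ZtHom.f (A.iota 1 ≫ mF))
    (hmcf : ZtHom.f mc = ContinuousMap.id A.carrier)
    (hmcζ : ∀ x : A.carrier, ZtHom.ζ mc x = ZtHom.ζ m₁ x * ZtHom.ζ (A.iota 1 ≫ mF) x) :
    Ω.map (A.iota 0 ≫ mF) = Ω.map mc ≫ Ω.map m₁ := by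
  have hcomp : mc ≫ m₁ = A.iota 1 ≫ mF := by
    apply ZtHom.ext
    · show m₁.f.comp mc.f = _
      rw [hmcf, ContinuousMap.comp_id, hm₁f]
    · funext x
      show m₁.ζ (mc.f x) * mc.ζ x = (A.iota 1 ≫ mF).ζ x
      rw [hmcf]
      show m₁.ζ x * mc.ζ x = _
      rw [hmcζ x, ← mul_assoc, Int.units_mul_self, one_mul]
  rw [Ω.map_comp, omega_iota_eq Ω hΩ A 0, ← omega_iota_eq Ω hΩ A 1, ← Ω.map_comp,
    ← hcomp, Ω.map_comp]
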